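/- For a smooth function ϱ : ℝ² → ℝ and a free index i ∈ {1,2}, define the three vector fields Φ₁₁ⁱ = Σ ε^{i i₂} ε^{j₁ j₂} ε^{k₁ k₂} (∂_{i₂}∂_{j₁}∂_{k₁}ϱ)(∂_{j₂}ϱ)(∂_{k₂}ϱ), Φ₁₂ⁱ = Σ ε^{i i₂} ε^{j₁ j₂} ε^{k₁ k₂} (∂_{j₁}∂_{k₁}ϱ)(∂_{i₂}∂_{j₂}ϱ)(∂_{k₂}ϱ), and Φ₃ⁱ = Σ ε^{i i₂} ε^{j₁ j₂} ε^{k₁ k₂} ϱ (∂_{j₁}∂_{k₁}ϱ)(∂_{i₂}∂_{j₂}∂_{k₂}ϱ), the sums running over all indices i₂, j₁, j₂, k₁, k₂ ∈ {1,2}. Suppose a, b, c ∈ ℝ are such that for every smooth ϱ : ℝ² → ℝ the vector field W = a·Φ₁₁ + b·Φ₁₂ + c·Φ₃ satisfies the Poisson-cocycle equation W¹ϱ_{x} + W²ϱ_{y} − ϱ(∂_x W¹ + ∂_y W²) = 0 identically on ℝ². Then a = 0 and b = 0. (Thus, up to nonzero constant multiples, Φ₃ is the unique vector field represented by Kontsevich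 graphs with [[ϱ∂_x∧∂_y, ·]] = 0.) -/
import Mathlib


/-- The partial derivative `∂/∂xⁱ` of a function on `ℝ² ≃ (Fin 2 → ℝ)`,
with `x = x¹ ↔ i = 0` and `y = x² ↔ i = 1`. -/
noncomputable def pd (i : Fin 2) (f : (Fin 2 → ℝ) → ℝ) : (Fin 2 → ℝ) → ℝ :=
  fun x => fderiv ℝ f x (Pi.single i 1)

/-- The two-index Levi-Civita symbol: `ε⁰¹ = 1 = −ε¹⁰`, `ε⁰⁰ = ε¹¹ = 0`
(indices `1, 2` of the paper are `0, 1` here). -/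
def eps (i j : Fin 2) : ℝ := (j : ℝ) - (i : ℝ)

/-- `φ(Γ₁₁^{2D})`, the graph vector field of the Kontsevich graph `[0,1;1,3;1,2]`:
`Φ₁₁ⁱ = Σ ε^{i i₂} ε^{j₁ j₂} ε^{k₁ k₂} (∂_{i₂}∂_{j₁}∂_{k₁}ϱ)(∂_{j₂}ϱ)(∂_{k₂}ϱ)`. -/
noncomputable def Phi11 (ϱ : (Fin 2 → ℝ) → ℝ) (i : Fin 2) (x : Fin 2 → ℝ) : ℝ :=
  ∑ i₂ : Fin 2, ∑ j₁ : Fin 2, ∑ j₂ : Fin 2, ∑ k₁ : Fin 2, ∑ k₂ : Fin 2,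
    eps i i₂ * eps j₁ j₂ * eps k₁ k₂ *
      (pd i₂ (pd j₁ (pd k₁ ϱ)) x * pd j₂ ϱ x * pd k₂ ϱ x)

/-- `φ(Γ₁₂^{2D})`, the graph vector field of the Kontsevich graph `[0,3;1,3;1,2]`:
`Φ₁₂ⁱ = Σ ε^{i i₂} ε^{j₁ j₂} ε^{k₁ k₂} (∂_{j₁}∂_{k₁}ϱ)(∂_{i₂}∂_{j₂}ϱ)(∂_{k₂}ϱ)`. -/
noncomputable def Phi12 (ϱ : (Fin 2 → ℝ) → ℝ) (i : Fin 2) (x : Fin 2 → ℝ) : ℝ :=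
  ∑ i₂ : Fin 2, ∑ j₁ : Fin 2, ∑ j₂ : Fin 2, ∑ k₁ : Fin 2, ∑ k₂ : Fin 2,
    eps i i₂ * eps j₁ j₂ * eps k₁ k₂ *
      (pd j₁ (pd k₁ ϱ) x * pd i₂ (pd j₂ ϱ) x * pd k₂ ϱ x)

/-- `φ(Γ₃^{2D})`, the graph vector field of the Kontsevich graph `[0,3;2,3;2,3]`:
`Φ₃ⁱ = Σ ε^{i i₂} ε^{j₁ j₂} ε^{k₁ k₂} ϱ (∂_{j₁}∂_{k₁}ϱ)(∂_{i₂}∂_{j₂}∂_{k₂}ϱ)`. -/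
noncomputable def Phi3 (ϱ : (Fin 2 → ℝ) → ℝ) (i : Fin 2) (x : Fin 2 → ℝ) : ℝ :=
  ∑ i₂ : Fin 2, ∑ j₁ : Fin 2, ∑ j₂ : Fin 2, ∑ k₁ : Fin 2, ∑ k₂ : Fin 2,
    eps i i₂ * eps j₁ j₂ * eps k₁ k₂ *
      (ϱ x * pd j₁ (pd k₁ ϱ) x * pd i₂ (pd j₂ (pd k₂ ϱ)) x)

/-- If `a, b, c ∈ ℝ` are such that for every smooth `ϱ : ℝ² → ℝ` the vector field
`W = a·Φ₁₁ + b·Φ₁₂ + c·Φ₃` satisfies the Poisson-cocycle equation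
`W¹ϱ_x + W²ϱ_y − ϱ(∂ₓW¹ + ∂_yW²) = 0` identically on `ℝ²`, then `a = 0` and `b = 0`:
up to nonzero constant multiples, `Φ₃` is the unique graph vector field `Y`
with `[[ϱ∂ₓ∧∂_y, Y]] = 0`. -/
lemma hasFDerivAt_pow_coord (j : Fin 2) (m : ℕ) (x : Fin 2 → ℝ) :
    HasFDerivAt (fun y : Fin 2 → ℝ => y j ^ m)
      (((m : ℝ) * x j ^ (m - 1)) •
        ContinuousLinearMap.proj (R := ℝ) (φ := fun _ : Fin 2 => ℝ) j) x :=
  (hasDerivAt_pow m (x j)).comp_hasFDerivAt x (hasFDerivAt_apply (𝕜 := ℝ) j x)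

lemma pd0_mono (d : ℝ) (m n : ℕ) :
    pd 0 (fun y : Fin 2 → ℝ => d * (y 0 ^ m * y 1 ^ n)) =
    fun x => (d * m) * (x 0 ^ (m - 1) * x 1 ^ n) := by
  funext x
  have h : HasFDerivAt (fun y : Fin 2 → ℝ => d * (y 0 ^ m * y 1 ^ n)) _ x :=
    ((hasFDerivAt_pow_coord 0 m x).mul (hasFDerivAt_pow_coord 1 n x)).const_mul d
  unfold pd
  rw [h.fderiv]
  simp [Pi.single_apply]
  ring

lemma pd1_mono (d : ℝ) (m n : ℕ) :
    pd 1 (fun y : Fin 2 → ℝ => d * (y 0 ^ m * y 1 ^ n)) =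
    fun x => (d * n) * (x 0 ^ m * x 1 ^ (n - 1)) := by
  funext x
  have h : HasFDerivAt (fun y : Fin 2 → ℝ => d * (y 0 ^ m * y 1 ^ n)) _ x :=
    ((hasFDerivAt_pow_coord 0 m x).mul (hasFDerivAt_pow_coord 1 n x)).const_mul d
  unfold pd
  rw [h.fderiv]
  simp [Pi.single_apply]
  ring

lemma e00 : eps 0 0 = 0 := by norm_num [eps]
lemma e01 : eps 0 1 = 1 := by norm_num [eps]
lemma e10 : eps 1 0 = -1 := by norm_num [eps]
lemma e11 : eps 1 1 = 0 := by norm_num [eps]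

lemma contDiff_mono (d : ℝ) (m n : ℕ) :
    ContDiff ℝ (⊤ : ℕ∞) (fun y : Fin 2 → ℝ => d * (y 0 ^ m * y 1 ^ n)) := by
  fun_prop

section test

theorem uniqueness_of_homogeneous_solution_2d (a b c : ℝ)
    (h : ∀ ϱ : (Fin 2 → ℝ) → ℝ, ContDiff ℝ (⊤ : ℕ∞) ϱ →
      ∀ x : Fin 2 → ℝ,
        (a * Phi11 ϱ 0 x + b * Phi12 ϱ 0 x + c * Phi3 ϱ 0 x) * pd 0 ϱ x
          + (a * Phi11 ϱ 1 x + b * Phi12 ϱ 1 x + c * Phi3 ϱ 1 x) * pd 1 ϱ x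
          - ϱ x *
            (pd 0 (fun y => a * Phi11 ϱ 0 y + b * Phi12 ϱ 0 y + c * Phi3 ϱ 0 y) x
              + pd 1 (fun y => a * Phi11 ϱ 1 y + b * Phi12 ϱ 1 y + c * Phi3 ϱ 1 y) x) = 0) :
    a = 0 ∧ b = 0 := by
  -- First test function ϱ = x²y
  have P110 : ∀ x : Fin 2 → ℝ,
      Phi11 (fun y => (1 : ℝ) * (y 0 ^ 2 * y 1 ^ 1)) 0 x = 2 * (x 0 ^ 4 * x 1 ^ 0) := by
    intro x
    simp only [Phi11, Fin.sum_univ_two, pd0_mono, pd1_mono, e00, e01, e10, e11]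
    norm_num; try ring
  have P111 : ∀ x : Fin 2 → ℝ,
      Phi11 (fun y => (1 : ℝ) * (y 0 ^ 2 * y 1 ^ 1)) 1 x = 8 * (x 0 ^ 3 * x 1 ^ 1) := by
    intro x
    simp only [Phi11, Fin.sum_univ_two, pd0_mono, pd1_mono, e00, e01, e10, e11]
    norm_num; try ring
  have P120 : ∀ x : Fin 2 → ℝ,
      Phi12 (fun y => (1 : ℝ) * (y 0 ^ 2 * y 1 ^ 1)) 0 x = -4 * (x 0 ^ 4 * x 1 ^ 0) := by
    intro x
    simp only [Phi12, Fin.sum_univ_two, pd0_mono, pd1_mono, e00, e01, e10, e11]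
    norm_num; try ring
  have P121 : ∀ x : Fin 2 → ℝ,
      Phi12 (fun y => (1 : ℝ) * (y 0 ^ 2 * y 1 ^ 1)) 1 x = 8 * (x 0 ^ 3 * x 1 ^ 1) := by
    intro x
    simp only [Phi12, Fin.sum_univ_two, pd0_mono, pd1_mono, e00, e01, e10, e11]
    norm_num; try ring
  have P30 : ∀ x : Fin 2 → ℝ,
      Phi3 (fun y => (1 : ℝ) * (y 0 ^ 2 * y 1 ^ 1)) 0 x = 0 * (x 0 ^ 4 * x 1 ^ 0) := by
    intro x
    simp only [Phi3, Fin.sum_univ_two, pd0_mono, pd1_mono, e00, e01, e10, e11]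
    norm_num; try ring
  have P31 : ∀ x : Fin 2 → ℝ,
      Phi3 (fun y => (1 : ℝ) * (y 0 ^ 2 * y 1 ^ 1)) 1 x = 8 * (x 0 ^ 3 * x 1 ^ 1) := by
    intro x
    simp only [Phi3, Fin.sum_univ_two, pd0_mono, pd1_mono, e00, e01, e10, e11]
    norm_num; try ring
  have h1 := h (fun y => (1 : ℝ) * (y 0 ^ 2 * y 1 ^ 1)) (contDiff_mono 1 2 1)
    (fun _ => (1 : ℝ))
  have hW0 : (fun y : Fin 2 → ℝ =>
        a * Phi11 (fun y => (1 : ℝ) * (y 0 ^ 2 * y 1 ^ 1)) 0 y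
          + b * Phi12 (fun y => (1 : ℝ) * (y 0 ^ 2 * y 1 ^ 1)) 0 y
          + c * Phi3 (fun y => (1 : ℝ) * (y 0 ^ 2 * y 1 ^ 1)) 0 y)
      = fun y => (2 * a + (-4) * b + 0 * c) * (y 0 ^ 4 * y 1 ^ 0) := by
    funext y; rw [P110 y, P120 y, P30 y]; ring
  have hW1 : (fun y : Fin 2 → ℝ =>
        a * Phi11 (fun y => (1 : ℝ) * (y 0 ^ 2 * y 1 ^ 1)) 1 y
          + b * Phi12 (fun y => (1 : ℝ) * (y 0 ^ 2 * y 1 ^ 1)) 1 y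
          + c * Phi3 (fun y => (1 : ℝ) * (y 0 ^ 2 * y 1 ^ 1)) 1 y)
      = fun y => (8 * a + 8 * b + 8 * c) * (y 0 ^ 3 * y 1 ^ 1) := by
    funext y; rw [P111 y, P121 y, P31 y]; ring
  rw [hW0, hW1] at h1
  simp only [P110, P111, P120, P121, P30, P31, pd0_mono, pd1_mono] at h1
  norm_num at h1

  -- Second test function ϱ = x²y³
  have Q110 : ∀ x : Fin 2 → ℝ,
      Phi11 (fun y => (1 : ℝ) * (y 0 ^ 2 * y 1 ^ 3)) 0 x = -66 * (x 0 ^ 4 * x 1 ^ 6) := by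
    intro x
    simp only [Phi11, Fin.sum_univ_two, pd0_mono, pd1_mono, e00, e01, e10, e11]
    norm_num; try ring
  have Q111 : ∀ x : Fin 2 → ℝ,
      Phi11 (fun y => (1 : ℝ) * (y 0 ^ 2 * y 1 ^ 3)) 1 x = 24 * (x 0 ^ 3 * x 1 ^ 7) := by
    intro x
    simp only [Phi11, Fin.sum_univ_two, pd0_mono, pd1_mono, e00, e01, e10, e11]
    norm_num; try ring
  have Q120 : ∀ x : Fin 2 → ℝ,
      Phi12 (fun y => (1 : ℝ) * (y 0 ^ 2 * y 1 ^ 3)) 0 x = -72 * (x 0 ^ 4 * x 1 ^ 6) := by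
    intro x
    simp only [Phi12, Fin.sum_univ_two, pd0_mono, pd1_mono, e00, e01, e10, e11]
    norm_num; try ring
  have Q121 : ∀ x : Fin 2 → ℝ,
      Phi12 (fun y => (1 : ℝ) * (y 0 ^ 2 * y 1 ^ 3)) 1 x = 48 * (x 0 ^ 3 * x 1 ^ 7) := by
    intro x
    simp only [Phi12, Fin.sum_univ_two, pd0_mono, pd1_mono, e00, e01, e10, e11]
    norm_num; try ring
  have Q30 : ∀ x : Fin 2 → ℝ,
      Phi3 (fun y => (1 : ℝ) * (y 0 ^ 2 * y 1 ^ 3)) 0 x = -96 * (x 0 ^ 4 * x 1 ^ 6) := by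
    intro x
    simp only [Phi3, Fin.sum_univ_two, pd0_mono, pd1_mono, e00, e01, e10, e11]
    norm_num; try ring
  have Q31 : ∀ x : Fin 2 → ℝ,
      Phi3 (fun y => (1 : ℝ) * (y 0 ^ 2 * y 1 ^ 3)) 1 x = 48 * (x 0 ^ 3 * x 1 ^ 7) := by
    intro x
    simp only [Phi3, Fin.sum_univ_two, pd0_mono, pd1_mono, e00, e01, e10, e11]
    norm_num; try ring
  have h2 := h (fun y => (1 : ℝ) * (y 0 ^ 2 * y 1 ^ 3)) (contDiff_mono 1 2 3)
    (fun _ => (1 : ℝ))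
  have hV0 : (fun y : Fin 2 → ℝ =>
        a * Phi11 (fun y => (1 : ℝ) * (y 0 ^ 2 * y 1 ^ 3)) 0 y
          + b * Phi12 (fun y => (1 : ℝ) * (y 0 ^ 2 * y 1 ^ 3)) 0 y
          + c * Phi3 (fun y => (1 : ℝ) * (y 0 ^ 2 * y 1 ^ 3)) 0 y)
      = fun y => (-66 * a + -72 * b + -96 * c) * (y 0 ^ 4 * y 1 ^ 6) := by
    funext y; rw [Q110 y, Q120 y, Q30 y]; ring
  have hV1 : (fun y : Fin 2 → ℝ =>
        a * Phi11 (fun y => (1 : ℝ) * (y 0 ^ 2 * y 1 ^ 3)) 1 y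
          + b * Phi12 (fun y => (1 : ℝ) * (y 0 ^ 2 * y 1 ^ 3)) 1 y
          + c * Phi3 (fun y => (1 : ℝ) * (y 0 ^ 2 * y 1 ^ 3)) 1 y)
      = fun y => (24 * a + 48 * b + 48 * c) * (y 0 ^ 3 * y 1 ^ 7) := by
    funext y; rw [Q111 y, Q121 y, Q31 y]; ring
  rw [hV0, hV1] at h2
  simp only [Q110, Q111, Q120, Q121, Q30, Q31, pd0_mono, pd1_mono] at h2
  norm_num at h2
  exact ⟨by linarith, by linarith⟩
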